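/- (Theorem 4.3) Let V₁, V₂, V₃, V₄ : ℝ → ℝ⁴ be twice differentiable maps forming, at every σ, a linearly independent family, with differentiable functions 𝒦₁, 𝒦₂, 𝒦₃ : ℝ → ℝ and signs μ₁,…,μ₅ ∈ {-1,1}, satisfying the equiform Frenet equations V₁' = 𝒦₁V₁ + V₂, V₂' = μ₁V₁ + 𝒦₁V₂ + μ₂𝒦₂V₃, V₃' = μ₃𝒦₂V₂ + 𝒦₁V₃ + μ₄𝒦₃V₄, V₄' = μ₅𝒦₃V₃ + 𝒦₁V₄. Then 𝒦₂ and 𝒦₃ are constant (the curve is a general helix) if and only if, for all σ, V₃'' + ψ₁V₃ = ψ₂V₁ + ψ₃V₂ + ψ₄V₄, where ψ₁ = -(𝒦₁' + 𝒦₁² + μ₂μ₃𝒦₂² + μ₄μ₅𝒦₃²), ψ₂ = μ₁μ₃𝒦₂, ψ₃ = 2μ₃𝒦₁𝒦₂, ψ₄ = 2μ₄𝒦₁𝒦₃. -/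

import Mathlib

noncomputable section

/-- The Minkowski bilinear form on ℝ⁴ with signature (-,+,+,+). -/
def B (x y : Fin 4 → ℝ) : ℝ :=
  -(x 0 * y 0) + x 1 * y 1 + x 2 * y 2 + x 3 * y 3

theorem spacelike_general_helix_characterization
    (V₁ V₂ V₃ V₄ : ℝ → Fin 4 → ℝ) (K₁ K₂ K₃ : ℝ → ℝ)
    (μ₁ μ₂ μ₃ μ₄ μ₅ : ℝ)
    (hμ₁ : μ₁ = -1 ∨ μ₁ = 1) (hμ₂ : μ₂ = -1 ∨ μ₂ = 1) (hμ₃ : μ₃ = -1 ∨ μ₃ = 1)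
    (hμ₄ : μ₄ = -1 ∨ μ₄ = 1) (hμ₅ : μ₅ = -1 ∨ μ₅ = 1)
    (hV₁d : Differentiable ℝ V₁) (hV₂d : Differentiable ℝ V₂)
    (hV₃d : Differentiable ℝ V₃) (hV₄d : Differentiable ℝ V₄)
    (hV₁d' : Differentiable ℝ (deriv V₁)) (hV₂d' : Differentiable ℝ (deriv V₂))
    (hV₃d' : Differentiable ℝ (deriv V₃)) (hV₄d' : Differentiable ℝ (deriv V₄))
    (hindep : ∀ σ, LinearIndependent ℝ ![V₁ σ, V₂ σ, V₃ σ, V₄ σ])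
    (hK₁d : Differentiable ℝ K₁) (hK₂d : Differentiable ℝ K₂)
    (hK₃d : Differentiable ℝ K₃)
    (hV₁' : ∀ σ, deriv V₁ σ = K₁ σ • V₁ σ + V₂ σ)
    (hV₂' : ∀ σ, deriv V₂ σ = μ₁ • V₁ σ + K₁ σ • V₂ σ + (μ₂ * K₂ σ) • V₃ σ)
    (hV₃' : ∀ σ, deriv V₃ σ = (μ₃ * K₂ σ) • V₂ σ + K₁ σ • V₃ σ + (μ₄ * K₃ σ) • V₄ σ)
    (hV₄' : ∀ σ, deriv V₄ σ = (μ₅ * K₃ σ) • V₃ σ + K₁ σ • V₄ σ) :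
    ((∃ c₂, ∀ σ, K₂ σ = c₂) ∧ (∃ c₃, ∀ σ, K₃ σ = c₃)) ↔
      (∀ σ, deriv (deriv V₃) σ +
          (-(deriv K₁ σ + (K₁ σ) ^ 2 + μ₂ * μ₃ * (K₂ σ) ^ 2 + μ₄ * μ₅ * (K₃ σ) ^ 2)) • V₃ σ =
        (μ₁ * μ₃ * K₂ σ) • V₁ σ + (2 * μ₃ * K₁ σ * K₂ σ) • V₂ σ +
          (2 * μ₄ * K₁ σ * K₃ σ) • V₄ σ) := by
  -- compute the second derivative of V₃
  have hd2 : ∀ σ, deriv (deriv V₃) σ =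
      (μ₁ * μ₃ * K₂ σ) • V₁ σ
      + (μ₃ * deriv K₂ σ + 2 * μ₃ * K₁ σ * K₂ σ) • V₂ σ
      + (deriv K₁ σ + K₁ σ ^ 2 + μ₂ * μ₃ * K₂ σ ^ 2 + μ₄ * μ₅ * K₃ σ ^ 2) • V₃ σ
      + (μ₄ * deriv K₃ σ + 2 * μ₄ * K₁ σ * K₃ σ) • V₄ σ := by
    intro σ
    have hfun : deriv V₃ = fun s => (μ₃ * K₂ s) • V₂ s + K₁ s • V₃ s + (μ₄ * K₃ s) • V₄ s :=
      funext hV₃'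
    have h1 : HasDerivAt (fun s => (μ₃ * K₂ s) • V₂ s)
        ((μ₃ * K₂ σ) • deriv V₂ σ + (μ₃ * deriv K₂ σ) • V₂ σ) σ :=
      (((hK₂d σ).hasDerivAt.const_mul μ₃)).smul (hV₂d σ).hasDerivAt
    have h2 : HasDerivAt (fun s => K₁ s • V₃ s)
        (K₁ σ • deriv V₃ σ + deriv K₁ σ • V₃ σ) σ :=
      (hK₁d σ).hasDerivAt.smul (hV₃d σ).hasDerivAt
    have h3 : HasDerivAt (fun s => (μ₄ * K₃ s) • V₄ s)
        ((μ₄ * K₃ σ) • deriv V₄ σ + (μ₄ * deriv K₃ σ) • V₄ σ) σ :=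
      (((hK₃d σ).hasDerivAt.const_mul μ₄)).smul (hV₄d σ).hasDerivAt
    have h := HasDerivAt.deriv (f := fun s => (μ₃ * K₂ s) • V₂ s + K₁ s • V₃ s + (μ₄ * K₃ s) • V₄ s) ((h1.add h2).add h3)
    rw [← hfun] at h
    rw [h, hV₂' σ, hV₃' σ, hV₄' σ]
    module
  constructor
  · rintro ⟨⟨c₂, hc₂⟩, ⟨c₃, hc₃⟩⟩ σ
    have e2 : deriv K₂ σ = 0 := by
      have : K₂ = fun _ => c₂ := funext hc₂
      rw [this, deriv_const]
    have e3 : deriv K₃ σ = 0 := by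
      have : K₃ = fun _ => c₃ := funext hc₃
      rw [this, deriv_const]
    rw [hd2 σ, e2, e3]
    module
  · intro h
    have key : ∀ σ, deriv K₂ σ = 0 ∧ deriv K₃ σ = 0 := by
      intro σ
      have hσ := h σ
      rw [hd2 σ] at hσ
      have hz : (μ₃ * deriv K₂ σ) • V₂ σ + (μ₄ * deriv K₃ σ) • V₄ σ = 0 := by
        have := sub_eq_zero.mpr hσ
        rw [← this]; module
      have hli := Fintype.linearIndependent_iff.mp (hindep σ)
        ![0, μ₃ * deriv K₂ σ, 0, μ₄ * deriv K₃ σ]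
      have hsum : ∑ i, (![0, μ₃ * deriv K₂ σ, 0, μ₄ * deriv K₃ σ]) i •
          (![V₁ σ, V₂ σ, V₃ σ, V₄ σ]) i = 0 := by
        rw [Fin.sum_univ_four, ← hz]
        simp
      have h1 := hli hsum 1
      have h3 := hli hsum 3
      simp at h1 h3
      have hμ₃0 : μ₃ ≠ 0 := by rcases hμ₃ with h | h <;> rw [h] <;> norm_num
      have hμ₄0 : μ₄ ≠ 0 := by rcases hμ₄ with h | h <;> rw [h] <;> norm_num
      exact ⟨h1.resolve_left hμ₃0, h3.resolve_left hμ₄0⟩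
    constructor
    · exact ⟨K₂ 0, fun σ => is_const_of_deriv_eq_zero hK₂d (fun s => (key s).1) σ 0⟩
    · exact ⟨K₃ 0, fun σ => is_const_of_deriv_eq_zero hK₃d (fun s => (key s).2) σ 0⟩
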